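/- Let H be a hermitian n×n complex matrix, let α > 0 and λ ∈ ℝ. Then the Bochner integral √(α/π) · ∫_ℝ e^{−α t²} · exp(i t (H − λ·1)) dt exists and equals Σ_{κ ∈ spectrum(H)} e^{−(κ−λ)²/(4α)} · Q_κ(H). (This is the Gaussian-smeared spectral operator 𝒫_λ used to approximate spectral projections of gapped Hamiltonians.) -/

import Mathlib

open scoped Matrix.Norms.L2Operator
open MeasureTheory

/-- The orthogonal projection (as a matrix) onto the eigenspace of `H` for the (real)
eigenvalue `κ`; it is `0` when `κ` is not an eigenvalue of `H`. -/
noncomputable def eigProj {n : Type*} [Fintype n] [DecidableEq n]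
    (H : Matrix n n ℂ) (κ : ℝ) : Matrix n n ℂ :=
  Matrix.toEuclideanLin.symm
    ((Module.End.eigenspace (Matrix.toEuclideanLin H) (κ : ℂ)).subtype ∘ₗ
      (Submodule.orthogonalProjectionOnto (Module.End.eigenspace (Matrix.toEuclideanLin H) (κ : ℂ))).toLinearMap)

section Aux

variable {n : Type*} [Fintype n] [DecidableEq n]

open Complex Module.End

lemma toEuclideanLin_mul (A B : Matrix n n ℂ) :
    Matrix.toEuclideanLin (A * B) =
      (Matrix.toEuclideanLin A) ∘ₗ (Matrix.toEuclideanLin B) := by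
  rw [Matrix.toEuclideanLin_eq_toLin, Matrix.toLin_mul _ (PiLp.basisFun 2 ℂ n) _]

lemma toEuclideanLin_eigProj (H : Matrix n n ℂ) (κ : ℝ) (v : EuclideanSpace ℂ n) :
    Matrix.toEuclideanLin (eigProj H κ) v =
      (Submodule.orthogonalProjectionOnto (eigenspace (Matrix.toEuclideanLin H) (κ : ℂ)) v : EuclideanSpace ℂ n) := by
  rw [eigProj, LinearEquiv.apply_symm_apply]; rfl

lemma eigProj_eq_zero (H : Matrix n n ℂ) (κ : ℝ)
    (h : ¬ HasEigenvalue (Matrix.toEuclideanLin H) (κ : ℂ)) : eigProj H κ = 0 := by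
  have hbot : eigenspace (Matrix.toEuclideanLin H) (κ : ℂ) = ⊥ := not_not.mp h
  have : Matrix.toEuclideanLin (eigProj H κ) = 0 := by
    apply LinearMap.ext
    intro v
    rw [toEuclideanLin_eigProj]
    have hm := (Submodule.eq_bot_iff _).mp hbot _
      (Submodule.orthogonalProjectionOnto (eigenspace (Matrix.toEuclideanLin H) (κ : ℂ)) v).2
    simpa using hm
  have := congrArg Matrix.toEuclideanLin.symm this
  simpa [eigProj] using this

lemma mul_eigProj (H : Matrix n n ℂ) (κ : ℝ) :
    H * eigProj H κ = (κ : ℂ) • eigProj H κ := by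
  apply Matrix.toEuclideanLin.injective
  rw [toEuclideanLin_mul, _root_.map_smul]
  apply LinearMap.ext
  intro v
  have hmem := (Submodule.orthogonalProjectionOnto (eigenspace (Matrix.toEuclideanLin H) (κ : ℂ)) v).2
  rw [mem_eigenspace_iff] at hmem
  simp only [LinearMap.comp_apply, LinearMap.smul_apply, toEuclideanLin_eigProj]
  exact hmem

lemma exp_mul_proj (A P : Matrix n n ℂ) (c : ℂ) (h : A * P = c • P) :
    NormedSpace.exp A * P = Complex.exp c • P := by
  have hpow : ∀ k : ℕ, A ^ k * P = c ^ k • P := by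
    intro k
    induction k with
    | zero => simp
    | succ k ih =>
      rw [pow_succ, mul_assoc, h, mul_smul_comm, ih, smul_smul, pow_succ, mul_comm (c ^ k) c]
  have hs : Summable fun k : ℕ => ((k.factorial : ℂ)⁻¹ : ℂ) • A ^ k :=
    NormedSpace.expSeries_summable' (𝕂 := ℂ) A
  have hsc : Summable fun k : ℕ => ((k.factorial : ℂ)⁻¹ : ℂ) • c ^ k :=
    NormedSpace.expSeries_summable' (𝕂 := ℂ) c
  rw [NormedSpace.exp_eq_tsum ℂ]
  calc (∑' k : ℕ, ((k.factorial : ℂ)⁻¹ : ℂ) • A ^ k) * P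
      = ∑' k : ℕ, (((k.factorial : ℂ)⁻¹ : ℂ) • A ^ k) * P := (hs.tsum_mul_right P).symm
    _ = ∑' k : ℕ, (((k.factorial : ℂ)⁻¹ : ℂ) • c ^ k) • P := by
        congr 1; funext k
        rw [smul_mul_assoc, hpow, smul_smul, smul_eq_mul]
    _ = (∑' k : ℕ, ((k.factorial : ℂ)⁻¹ : ℂ) • c ^ k) • P := hsc.tsum_smul_const P
    _ = Complex.exp c • P := by
        have h2 : (∑' k : ℕ, ((k.factorial : ℂ)⁻¹ : ℂ) • c ^ k) = NormedSpace.exp c :=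
          (congrFun (NormedSpace.exp_eq_tsum (𝕂 := ℂ)) c).symm
        rw [h2, ← Complex.exp_eq_exp_ℂ]


lemma toEuclideanLin_one' : Matrix.toEuclideanLin (1 : Matrix n n ℂ) = LinearMap.id := by
  rw [Matrix.toEuclideanLin_eq_toLin, Matrix.toLin_one]

lemma sum_eigProj_eq_one (H : Matrix n n ℂ) (hH : H.IsHermitian) (s : Finset ℝ)
    (hs : ∀ κ : ℝ, HasEigenvalue (Matrix.toEuclideanLin H) (κ : ℂ) → κ ∈ s) :
    ∑ κ ∈ s, eigProj H κ = 1 := by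
  have hT : (Matrix.toEuclideanLin H).IsSymmetric :=
    Matrix.isHermitian_iff_isSymmetric.mp hH
  set T := Matrix.toEuclideanLin H with hTdef
  apply Matrix.toEuclideanLin.injective
  rw [map_sum, toEuclideanLin_one']
  apply LinearMap.ext
  intro v
  rw [LinearMap.sum_apply, LinearMap.id_apply]
  have htop : (⨆ μ : ℂ, eigenspace T μ) = ⊤ :=
    Submodule.orthogonal_eq_bot_iff.mp hT.orthogonalComplement_iSup_eigenspaces_eq_bot
  have hv : v ∈ ⨆ μ : ℂ, eigenspace T μ := htop ▸ Submodule.mem_top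
  obtain ⟨f, hf, hfsum⟩ := (Submodule.mem_iSup_iff_exists_finsupp _ _).mp hv
  have hvs : v = ∑ μ ∈ f.support, f μ := by rw [← hfsum]; rfl
  have hproj : ∀ κ : ℝ, (↑(Submodule.orthogonalProjectionOnto (eigenspace T (κ : ℂ)) v)
      : EuclideanSpace ℂ n) = f (κ : ℂ) := by
    intro κ
    conv_lhs => rw [hvs]
    rw [map_sum, AddSubmonoidClass.coe_finset_sum]
    have hterm : ∀ μ ∈ f.support,
        (↑(Submodule.orthogonalProjectionOnto (eigenspace T (κ : ℂ)) (f μ)) : EuclideanSpace ℂ n) =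
          if μ = (κ : ℂ) then f μ else 0 := by
      intro μ _
      by_cases hμκ : μ = (κ : ℂ)
      · rw [if_pos hμκ]
        exact Submodule.starProjection_eq_self_iff.mpr (hμκ ▸ hf μ)
      · rw [if_neg hμκ]
        have horth : f μ ∈ (eigenspace T (κ : ℂ))ᗮ := by
          rw [Submodule.mem_orthogonal]
          intro u hu
          exact hT.orthogonalFamily_eigenspaces (Ne.symm hμκ) ⟨u, hu⟩ ⟨f μ, hf μ⟩
        rw [Submodule.orthogonalProjectionOnto_apply_of_mem_orthogonal horth]
        rfl
    rw [Finset.sum_congr rfl hterm, Finset.sum_ite_eq' f.support ((κ : ℂ)) f]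
    split_ifs with hmem
    · rfl
    · exact (Finsupp.notMem_support_iff.mp hmem).symm
  have hinj : Set.InjOn (fun κ : ℝ => (κ : ℂ)) s := fun a _ b _ h =>
    Complex.ofReal_injective h
  have hsub : f.support ⊆ s.image (fun κ : ℝ => (κ : ℂ)) := by
    intro μ hμ
    have hne : f μ ≠ 0 := Finsupp.mem_support_iff.mp hμ
    have hev : HasEigenvalue T μ := hasEigenvalue_of_hasEigenvector ⟨hf μ, hne⟩
    have hre : ((μ.re : ℝ) : ℂ) = μ :=
      Complex.conj_eq_iff_re.mp (hT.conj_eigenvalue_eq_self hev)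
    exact Finset.mem_image.mpr ⟨μ.re, hs μ.re (by rwa [hre]), hre⟩
  have himg : ∑ κ ∈ s, f (κ : ℂ) = v := by
    have h1 : ∑ μ ∈ s.image (fun κ : ℝ => (κ : ℂ)), f μ = ∑ κ ∈ s, f ((κ : ℝ) : ℂ) :=
      Finset.sum_image fun a _ b _ h => Complex.ofReal_injective h
    have h2 : ∑ μ ∈ f.support, f μ = ∑ μ ∈ s.image (fun κ : ℝ => (κ : ℂ)), f μ :=
      Finset.sum_subset hsub fun x _ hx => Finsupp.notMem_support_iff.mp hx
    rw [← h1, ← h2, ← hvs]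
  calc ∑ κ ∈ s, Matrix.toEuclideanLin (eigProj H κ) v
      = ∑ κ ∈ s, f (κ : ℂ) := by
        refine Finset.sum_congr rfl fun κ _ => ?_
        rw [toEuclideanLin_eigProj, hproj]
    _ = v := himg

omit [Fintype n] [DecidableEq n] in
lemma ofReal_smul_matrix (r : ℝ) (X : Matrix n n ℂ) : r • X = ((r : ℂ)) • X := by
  ext i j
  simp [Matrix.smul_apply, Complex.real_smul]

end Aux

theorem gaussian_smeared_spectral_operator
    {n : Type*} [Fintype n] [DecidableEq n]
    (H : Matrix n n ℂ) (hH : H.IsHermitian) (α lam : ℝ) (hα : 0 < α) :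
    Integrable (fun t : ℝ =>
        Real.exp (-α * t ^ 2) •
          NormedSpace.exp ((Complex.I * (t : ℂ)) • (H - (lam : ℂ) • 1))) ∧
    Real.sqrt (α / Real.pi) •
        (∫ t : ℝ, Real.exp (-α * t ^ 2) •
          NormedSpace.exp ((Complex.I * (t : ℂ)) • (H - (lam : ℂ) • 1))) =
      ∑ᶠ κ : ℝ, Real.exp (-(κ - lam) ^ 2 / (4 * α)) • eigProj H κ := by
  classical
  open Complex Module.End in
  have hfin2 : Set.Finite ((fun κ : ℝ => (κ : ℂ)) ⁻¹'
      {μ : ℂ | HasEigenvalue (Matrix.toEuclideanLin H) μ}) :=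
    Set.Finite.preimage Complex.ofReal_injective.injOn
      (Module.End.finite_hasEigenvalue (Matrix.toEuclideanLin H))
  set s : Finset ℝ := hfin2.toFinset with hsdef
  have hsmem : ∀ κ : ℝ, Module.End.HasEigenvalue (Matrix.toEuclideanLin H) (κ : ℂ) → κ ∈ s :=
    fun κ h => hfin2.mem_toFinset.mpr h
  have hone := sum_eigProj_eq_one H hH s hsmem
  set M := H - (lam : ℂ) • (1 : Matrix n n ℂ) with hMdef
  have hMP : ∀ κ : ℝ, M * eigProj H κ = (((κ : ℂ) - lam)) • eigProj H κ := by
    intro κ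
    rw [hMdef, sub_mul, mul_eigProj, smul_mul_assoc, one_mul, sub_smul]
  have hexp : ∀ t : ℝ, ∀ κ : ℝ,
      NormedSpace.exp ((Complex.I * (t : ℂ)) • M) * eigProj H κ =
        Complex.exp (Complex.I * (t : ℂ) * ((κ : ℂ) - lam)) • eigProj H κ := by
    intro t κ
    apply exp_mul_proj
    rw [smul_mul_assoc, hMP, smul_smul]
  have hkey : ∀ t : ℝ, NormedSpace.exp ((Complex.I * (t : ℂ)) • M) =
      ∑ κ ∈ s, Complex.exp (Complex.I * (t : ℂ) * ((κ : ℂ) - lam)) • eigProj H κ := by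
    intro t
    conv_lhs => rw [← mul_one (NormedSpace.exp ((Complex.I * (t : ℂ)) • M)), ← hone,
      Finset.mul_sum]
    exact Finset.sum_congr rfl fun κ _ => hexp t κ
  set G : ℝ → ℝ → Matrix n n ℂ := fun κ t =>
    (Complex.exp (Complex.I * ((κ : ℂ) - (lam : ℂ)) * (t : ℂ)) *
      Complex.exp (-(α : ℂ) * (t : ℂ) ^ 2)) • eigProj H κ with hG
  have hfeq : (fun t : ℝ => Real.exp (-α * t ^ 2) •
      NormedSpace.exp ((Complex.I * (t : ℂ)) • M)) = fun t => ∑ κ ∈ s, G κ t := by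
    funext t
    rw [hkey, Finset.smul_sum]
    refine Finset.sum_congr rfl fun κ _ => ?_
    rw [hG, ofReal_smul_matrix, smul_smul]
    congr 1
    have h1 : ((Real.exp (-α * t ^ 2) : ℝ) : ℂ) = Complex.exp (-(α : ℂ) * (t : ℂ) ^ 2) := by
      rw [Complex.ofReal_exp]; congr 1; push_cast; ring
    rw [h1, ← Complex.exp_add, ← Complex.exp_add]
    congr 1
    ring
  have hb : (0 : ℝ) < ((α : ℂ)).re := by simpa using hα
  have hGint : ∀ κ ∈ s, Integrable (G κ) := by
    intro κ _
    have hsc : Integrable (fun t : ℝ => Complex.exp (Complex.I * ((κ : ℂ) - (lam : ℂ)) * (t : ℂ)) *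
        Complex.exp (-(α : ℂ) * (t : ℂ) ^ 2)) := by
      have heq : (fun t : ℝ => Complex.exp (Complex.I * ((κ : ℂ) - (lam : ℂ)) * (t : ℂ)) *
          Complex.exp (-(α : ℂ) * (t : ℂ) ^ 2)) =
          fun t : ℝ => Complex.exp (-(α : ℂ) * (t : ℂ) ^ 2 +
            (Complex.I * ((κ : ℂ) - (lam : ℂ))) * (t : ℂ) + 0) := by
        funext t; rw [← Complex.exp_add]; congr 1; ring
      rw [heq]
      exact integrable_cexp_quadratic hb (Complex.I * ((κ : ℂ) - (lam : ℂ))) 0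
    simpa only [hG] using hsc.smul_const (eigProj H κ)
  have hint : Integrable (fun t : ℝ => Real.exp (-α * t ^ 2) •
      NormedSpace.exp ((Complex.I * (t : ℂ)) • M)) := by
    rw [hfeq]; exact integrable_finset_sum s hGint
  refine ⟨hint, ?_⟩
  have hIG : ∀ κ ∈ s, (∫ t : ℝ, G κ t) =
      (((Real.pi : ℂ) / α) ^ (1 / 2 : ℂ) *
        Complex.exp (-((κ : ℂ) - lam) ^ 2 / (4 * α))) • eigProj H κ := by
    intro κ _
    simp only [hG]
    rw [integral_smul_const, fourierIntegral_gaussian hb ((κ : ℂ) - lam)]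
  rw [hfeq, integral_finset_sum s hGint, Finset.sum_congr rfl hIG, Finset.smul_sum]
  have hsupp : (Function.support fun κ : ℝ =>
      Real.exp (-(κ - lam) ^ 2 / (4 * α)) • eigProj H κ) ⊆ ↑s := by
    intro κ hκ
    by_contra hns
    have hz : eigProj H κ = 0 := eigProj_eq_zero H κ fun hev => hns (hsmem κ hev)
    exact hκ (by simp [hz])
  rw [finsum_eq_finset_sum_of_support_subset _ hsupp]
  refine Finset.sum_congr rfl fun κ _ => ?_
  rw [ofReal_smul_matrix, ofReal_smul_matrix, smul_smul]
  congr 1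
  have hπ : (0 : ℝ) < Real.pi := Real.pi_pos
  have h3 : ((Real.pi : ℂ) / α) ^ (1 / 2 : ℂ) = ((Real.sqrt (Real.pi / α) : ℝ) : ℂ) := by
    rw [show ((Real.pi : ℂ) / α) = ((Real.pi / α : ℝ) : ℂ) by push_cast; ring,
      show (1 / 2 : ℂ) = ((1 / 2 : ℝ) : ℂ) by norm_num,
      ← Complex.ofReal_cpow (by positivity), ← Real.sqrt_eq_rpow]
  have h4 : Complex.exp (-((κ : ℂ) - lam) ^ 2 / (4 * α)) =
      ((Real.exp (-(κ - lam) ^ 2 / (4 * α)) : ℝ) : ℂ) := by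
    rw [Complex.ofReal_exp]; congr 1; push_cast; ring
  rw [h3, h4, ← Complex.ofReal_mul, ← Complex.ofReal_mul]
  congr 1
  have h5 : Real.sqrt (α / Real.pi) * Real.sqrt (Real.pi / α) = 1 := by
    rw [← Real.sqrt_mul (by positivity), show (α / Real.pi) * (Real.pi / α) = 1 by
      field_simp]
    exact Real.sqrt_one
  rw [← mul_assoc, h5, one_mul]
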